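/- Let q ∈ L¹[0,1] be real-valued and let {λₙ} be the eigenvalues of the Neumann problem -y''+qy=λy, y'(0)=y'(1)=0. Assume the standard asymptotics λₙ = (nπ)² + ∫₀¹ q(x) dx + o(1) as n → ∞. If λ₀ ≥ 0 and λₙ = (nπ)² for all n larger than some n₀, then q = 0 almost everywhere. -/

import Mathlib

open MeasureTheory intervalIntegral Complex Filter
open scoped ContDiff ENNReal

/-- The (real-valued) Rayleigh quotient of `y` for the operator `-y'' + q y` on `[0,1]`. -/
noncomputable def rayleighQuotientR (q : ℝ → ℝ) (y : ℝ → ℂ) : ℝ :=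
  (∫ x in (0:ℝ)..1,
      ((-(starRingEnd ℂ) (y x) * deriv (deriv y) x).re + q x * ‖y x‖^2)) /
  (∫ x in (0:ℝ)..1, ‖y x‖^2)

/-- Neumann boundary conditions on `[0,1]`. -/
def NeumannBC (y : ℝ → ℂ) : Prop := deriv y 0 = 0 ∧ deriv y 1 = 0

/-- `y` is a Neumann eigenfunction with eigenvalue `lam`. -/
def IsNeumannEigenfunction (q : ℝ → ℝ) (lam : ℝ) (y : ℝ → ℂ) : Prop :=
  ContDiff ℝ 2 y ∧ (∃ x ∈ Set.Icc (0:ℝ) 1, y x ≠ 0) ∧ NeumannBC y ∧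
  ∀ᵐ x, x ∈ Set.Icc (0:ℝ) 1 → -deriv (deriv y) x + (q x : ℂ) * y x = (lam : ℂ) * y x

/-- `lam` is a Neumann eigenvalue. -/
def IsNeumannEigenvalue (q : ℝ → ℝ) (lam : ℝ) : Prop := ∃ y, IsNeumannEigenfunction q lam y

/-- `lam0` is the smallest Neumann eigenvalue. -/
def IsFirstNeumannEigenvalue (q : ℝ → ℝ) (lam0 : ℝ) : Prop :=
  IsNeumannEigenvalue q lam0 ∧ ∀ lam, IsNeumannEigenvalue q lam → lam0 ≤ lam

lemma deriv2_ofReal (r : ℝ → ℝ) (hr : ContDiff ℝ 2 r) :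
    deriv (deriv (fun x => ((r x : ℝ) : ℂ))) = fun x => ((deriv (deriv r) x : ℝ) : ℂ) := by
  have hrd : Differentiable ℝ r := hr.differentiable (by norm_num)
  have hr1 : ContDiff ℝ 1 (deriv r) := by
    have := (contDiff_succ_iff_deriv (n := 1)).mp (by exact_mod_cast hr)
    exact this.2.2
  have hrd1 : Differentiable ℝ (deriv r) := hr1.differentiable (by norm_num)
  have h1 : deriv (fun x => ((r x : ℝ) : ℂ)) = fun x => ((deriv r x : ℝ) : ℂ) := by
    funext x
    exact ((hrd x).hasDerivAt.ofReal_comp).deriv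
  rw [h1]
  funext x
  exact ((hrd1 x).hasDerivAt.ofReal_comp).deriv

lemma rayleigh_ofReal (q r : ℝ → ℝ) (hr : ContDiff ℝ 2 r) :
    rayleighQuotientR q (fun x => ((r x : ℝ) : ℂ)) =
      (∫ x in (0:ℝ)..1, (-(r x) * deriv (deriv r) x + q x * (r x)^2)) /
      (∫ x in (0:ℝ)..1, (r x)^2) := by
  unfold rayleighQuotientR
  rw [deriv2_ofReal r hr]
  congr 1
  · apply intervalIntegral.integral_congr
    intro x _
    simp [Complex.conj_ofReal, ← Complex.ofReal_mul, Complex.sq_norm, Complex.normSq_ofReal]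
  · apply intervalIntegral.integral_congr
    intro x _
    simp [Complex.sq_norm, Complex.normSq_ofReal, sq]

lemma key_lemma (q : ℝ → ℝ) (hq : IntegrableOn q (Set.Icc (0:ℝ) 1))
    (hvar0 : ∀ y : ℝ → ℂ, ContDiff ℝ 2 y → (∃ x ∈ Set.Icc (0:ℝ) 1, y x ≠ 0) →
      NeumannBC y → 0 ≤ rayleighQuotientR q y)
    (hq0 : (∫ x in (0:ℝ)..1, q x) = 0)
    (g : ℝ → ℝ) (hg : ContDiff ℝ ∞ g) (hgs : HasCompactSupport g)
    (hgt : tsupport g ⊆ Set.Ioo 0 1) :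
    (∫ x in (0:ℝ)..1, q x * g x) = 0 := by
  -- derivatives of g
  set g1 := deriv g with hg1def
  set g2 := deriv g1 with hg2def
  have hgd : Differentiable ℝ g := hg.differentiable (by simp)
  have hg1s : ContDiff ℝ ∞ g1 := (contDiff_infty_iff_deriv.mp hg).2
  have hg1d : Differentiable ℝ g1 := hg1s.differentiable (by simp)
  have hg2c : Continuous g2 := ((contDiff_infty_iff_deriv.mp hg1s).2).continuous
  -- boundary vanishing
  have h0t : (0:ℝ) ∉ tsupport g := fun h => absurd (hgt h).1 (lt_irrefl 0)
  have h1t : (1:ℝ) ∉ tsupport g := fun h => absurd (hgt h).2 (lt_irrefl 1)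
  have hg_0 : g 0 = 0 := image_eq_zero_of_notMem_tsupport h0t
  have hg1_0 : g1 0 = 0 := by
    by_contra h
    exact h0t (support_deriv_subset (Function.mem_support.mpr h))
  have hg1_1 : g1 1 = 0 := by
    by_contra h
    exact h1t (support_deriv_subset (Function.mem_support.mpr h))
  -- integral of g2 vanishes
  have hintg2 : (∫ x in (0:ℝ)..1, g2 x) = 0 := by
    rw [hg2def, integral_deriv_eq_sub (fun x _ => (hg1d x))
      (hg2c.intervalIntegrable 0 1), hg1_0, hg1_1, sub_zero]
  -- integrability
  obtain ⟨C, hC⟩ := hgs.exists_bound_of_continuous hg.continuous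
  have hqI : IntervalIntegrable q volume 0 1 :=
    (intervalIntegrable_iff_integrableOn_Ioc_of_le zero_le_one).mpr
      (hq.mono_set Set.Ioc_subset_Icc_self)
  have hqgI : IntervalIntegrable (fun x => q x * g x) volume 0 1 := by
    rw [intervalIntegrable_iff_integrableOn_Ioc_of_le zero_le_one]
    have : IntegrableOn (fun x => g x * q x) (Set.Ioc (0:ℝ) 1) := by
      exact (hq.mono_set Set.Ioc_subset_Icc_self).bdd_mul
        hg.continuous.aestronglyMeasurable.restrict (Filter.Eventually.of_forall fun x => hC x)
    exact this.congr_fun (fun x _ => mul_comm (g x) (q x)) measurableSet_Ioc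
  have hqg2I : IntervalIntegrable (fun x => q x * (g x)^2) volume 0 1 := by
    rw [intervalIntegrable_iff_integrableOn_Ioc_of_le zero_le_one]
    have : IntegrableOn (fun x => (g x)^2 * q x) (Set.Ioc (0:ℝ) 1) := by
      refine (hq.mono_set Set.Ioc_subset_Icc_self).bdd_mul
        ((hg.continuous.pow 2).aestronglyMeasurable.restrict) (c := C^2) (Filter.Eventually.of_forall fun x => ?_)
      have h1 : ‖g x ^ 2‖ = ‖g x‖^2 := by rw [norm_pow]
      rw [h1]
      exact pow_le_pow_left₀ (norm_nonneg _) (hC x) 2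
    exact this.congr_fun (fun x _ => mul_comm _ (q x)) measurableSet_Ioc
  have hg2I : IntervalIntegrable g2 volume 0 1 := hg2c.intervalIntegrable 0 1
  have hgg2I : IntervalIntegrable (fun x => g x * g2 x) volume 0 1 :=
    (hg.continuous.mul hg2c).intervalIntegrable 0 1
  have hgI : IntervalIntegrable g volume 0 1 := hg.continuous.intervalIntegrable 0 1
  have hgsqI : IntervalIntegrable (fun x => (g x)^2) volume 0 1 :=
    (hg.continuous.pow 2).intervalIntegrable 0 1
  -- the constants
  set A := ∫ x in (0:ℝ)..1, q x * g x with hA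
  set B := ∫ x in (0:ℝ)..1, (q x * (g x)^2 - g x * g2 x) with hB
  set G := ∫ x in (0:ℝ)..1, g x with hG
  set G2 := ∫ x in (0:ℝ)..1, (g x)^2 with hG2
  -- numerator formula
  have h2I : IntervalIntegrable (fun x => 2 * (q x * g x) - g2 x) volume 0 1 :=
    (hqgI.const_mul 2).sub hg2I
  have h3I : IntervalIntegrable (fun x => q x * (g x)^2 - g x * g2 x) volume 0 1 :=
    hqg2I.sub hgg2I
  have hNum : ∀ t : ℝ,
      (∫ x in (0:ℝ)..1, (-(1 + t * g x) * deriv (deriv (fun x => 1 + t * g x)) x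
        + q x * (1 + t * g x)^2)) = 2*t*A + t^2*B := by
    intro t
    have hr1 : deriv (fun x => 1 + t * g x) = fun x => t * g1 x := by
      funext x
      exact (((hgd x).hasDerivAt.const_mul t).const_add 1).deriv
    have hr2 : deriv (deriv (fun x => 1 + t * g x)) = fun x => t * g2 x := by
      rw [hr1]; funext x
      exact ((hg1d x).hasDerivAt.const_mul t).deriv
    rw [hr2]
    have hcong : Set.EqOn
        (fun x => (-(1 + t * g x) * (t * g2 x) + q x * (1 + t * g x)^2))
        (fun x => q x + (t * (2 * (q x * g x) - g2 x)
          + t^2 * (q x * (g x)^2 - g x * g2 x))) (Set.uIcc (0:ℝ) 1) := by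
      intro x _; simp only; ring
    rw [intervalIntegral.integral_congr hcong,
        intervalIntegral.integral_add hqI ((h2I.const_mul t).add (h3I.const_mul (t^2))),
        intervalIntegral.integral_add (h2I.const_mul t) (h3I.const_mul (t^2)),
        intervalIntegral.integral_const_mul, intervalIntegral.integral_const_mul,
        intervalIntegral.integral_sub (hqgI.const_mul 2) hg2I,
        intervalIntegral.integral_const_mul, hintg2, hq0, ← hA, ← hB]
    ring
  -- denominator formula
  have hDen : ∀ t : ℝ, (∫ x in (0:ℝ)..1, (1 + t * g x)^2) = 1 + 2*t*G + t^2*G2 := by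
    intro t
    have hcong : Set.EqOn (fun x => (1 + t * g x)^2)
        (fun x => 1 + (t * (2 * g x) + t^2 * (g x)^2)) (Set.uIcc (0:ℝ) 1) := by
      intro x _; simp only; ring
    rw [intervalIntegral.integral_congr hcong,
        intervalIntegral.integral_add intervalIntegrable_const
          (((hgI.const_mul 2).const_mul t).add (hgsqI.const_mul (t^2))),
        intervalIntegral.integral_add ((hgI.const_mul 2).const_mul t)
          (hgsqI.const_mul (t^2)),
        intervalIntegral.integral_const_mul, intervalIntegral.integral_const_mul,
        intervalIntegral.integral_const_mul, intervalIntegral.integral_const, ← hG, ← hG2]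
    simp
    ring
  -- the variational inequality
  have hineq : ∀ t : ℝ, 0 ≤ (2*t*A + t^2*B) / (1 + 2*t*G + t^2*G2) := by
    intro t
    have hrcd : ContDiff ℝ 2 (fun x => 1 + t * g x) :=
      contDiff_const.add (contDiff_const.mul (hg.of_le (WithTop.coe_le_coe.mpr le_top)))
    have hderiv : ∀ x₀ : ℝ, deriv (fun x : ℝ => ((1 + t * g x : ℝ) : ℂ)) x₀
        = ((t * g1 x₀ : ℝ) : ℂ) := by
      intro x₀
      exact ((((hgd x₀).hasDerivAt.const_mul t).const_add 1).ofReal_comp).deriv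
    have hy := hvar0 (fun x => ((1 + t * g x : ℝ) : ℂ))
      (Complex.ofRealCLM.contDiff.comp hrcd)
      ⟨0, ⟨le_refl 0, zero_le_one⟩, by simp [hg_0]⟩
      ⟨by rw [hderiv 0]; simp [hg1_0], by rw [hderiv 1]; simp [hg1_1]⟩
    rwa [rayleigh_ofReal q (fun x => 1 + t * g x) hrcd, hNum t, hDen t] at hy
  clear_value A B G G2
  -- smallness: for small t the denominator is positive, hence numerator nonneg
  set M : ℝ := |G| + |G2| + 1 with hM
  have hMpos : 0 < M := by positivity
  set δ : ℝ := min 1 (1/(2*M)) with hδ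
  have hδpos : 0 < δ := lt_min one_pos (by positivity)
  have hNpos : ∀ t : ℝ, |t| < δ → 0 ≤ 2*t*A + t^2*B := by
    intro t ht
    have ht1 : |t| ≤ 1 := le_of_lt (lt_of_lt_of_le ht (min_le_left _ _))
    have ht2 : |t| < 1/(2*M) := lt_of_lt_of_le ht (min_le_right _ _)
    have ht0 : 0 ≤ |t| := abs_nonneg t
    have htG : -(|t| * |G|) ≤ t * G := by
      rw [← abs_mul]; exact neg_abs_le _
    have htsq : |t|^2 ≤ |t| := by
      rw [sq]; nlinarith
    have htG2 : -(|t| * |G2|) ≤ t^2 * G2 := by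
      have e1 : -|t^2 * G2| ≤ t^2 * G2 := neg_abs_le _
      have e2 : |t^2 * G2| = |t|^2 * |G2| := by rw [abs_mul, ← pow_abs]
      have e3 : |t|^2 * |G2| ≤ |t| * |G2| :=
        mul_le_mul_of_nonneg_right htsq (abs_nonneg G2)
      nlinarith
    have h4 : |t| * (2*M) < 1 := by
      rw [lt_div_iff₀ (by positivity : (0:ℝ) < 2*M)] at ht2
      linarith
    have h6 : |t| * (2*M) = 2*(|t| * |G|) + 2*(|t| * |G2|) + 2*|t| := by
      rw [hM]; ring
    have hD : 0 < 1 + 2*t*G + t^2*G2 := by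
      have hx : 0 ≤ |t| * |G2| := by positivity
      nlinarith [htG, htG2]
    have h5 := mul_nonneg (hineq t) (le_of_lt hD)
    rwa [div_mul_cancel₀ _ (ne_of_gt hD)] at h5
  -- conclude A = 0
  by_contra hAne
  have hApos : 0 < |A| := abs_pos.mpr hAne
  set c : ℝ := min (δ / (2 * |A|)) (1 / (|B| + 1)) with hc
  have hcpos : 0 < c := lt_min (by positivity) (by positivity)
  have hct : |(-(c * A))| < δ := by
    rw [abs_neg, abs_mul, abs_of_pos hcpos]
    have h1 : c ≤ δ / (2 * |A|) := min_le_left _ _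
    have h2 : c * |A| ≤ (δ / (2 * |A|)) * |A| :=
      mul_le_mul_of_nonneg_right h1 (abs_nonneg A)
    have h3 : (δ / (2 * |A|)) * |A| = δ / 2 := by field_simp
    nlinarith
  have hN := hNpos (-(c * A)) hct
  have hcB : c * B < 2 := by
    have h1 : c ≤ 1 / (|B| + 1) := min_le_right _ _
    have h2 : B ≤ |B| := le_abs_self B
    have h3 : c * B ≤ c * |B| := mul_le_mul_of_nonneg_left h2 hcpos.le
    have h4 : c * |B| ≤ (1 / (|B| + 1)) * |B| :=
      mul_le_mul_of_nonneg_right h1 (abs_nonneg B)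
    have h5 : (1 / (|B| + 1)) * |B| < 1 := by
      rw [div_mul_eq_mul_div, div_lt_one (by positivity)]
      linarith
    linarith
  have hexp : 2*(-(c * A))*A + (-(c * A))^2*B = c * A^2 * (c * B - 2) := by ring
  rw [hexp] at hN
  have hneg : c * A^2 * (c * B - 2) < 0 :=
    mul_neg_of_pos_of_neg (by positivity) (by linarith)
  linarith

/-- Theorem 5(b): Neumann eigenvalues `λₙ` with the standard asymptotics
`λₙ = (nπ)² + ∫₀¹ q + o(1)`. If `λ₀ ≥ 0` and `λₙ = (nπ)²` for all `n > n₀`, then `q = 0`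
a.e. -/
theorem ambarzumyan_neumann_reduced (q : ℝ → ℝ)
    (hq : IntegrableOn q (Set.Icc (0:ℝ) 1))
    (lam : ℕ → ℝ)
    (hfirst : IsFirstNeumannEigenvalue q (lam 0))
    (heig : ∀ n, IsNeumannEigenvalue q (lam n))
    (hvar : ∀ y : ℝ → ℂ, ContDiff ℝ 2 y → (∃ x ∈ Set.Icc (0:ℝ) 1, y x ≠ 0) →
      NeumannBC y → lam 0 ≤ rayleighQuotientR q y)
    (hasymp : Tendsto
      (fun n : ℕ => lam n - ((n * Real.pi)^2 + ∫ x in (0:ℝ)..1, q x)) atTop (nhds 0))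
    (h0 : lam 0 ≥ 0)
    (hn0 : ∃ n0 : ℕ, ∀ n > n0, lam n = (n * Real.pi)^2) :
    ∀ᵐ x, x ∈ Set.Icc (0:ℝ) 1 → q x = 0 := by
  -- Step 1: the integral of q vanishes
  obtain ⟨n0, hn⟩ := hn0
  have hq0 : (∫ x in (0:ℝ)..1, q x) = 0 := by
    have hconst : (fun n : ℕ => lam n - ((n * Real.pi)^2 + ∫ x in (0:ℝ)..1, q x))
        =ᶠ[atTop] (fun _ => -(∫ x in (0:ℝ)..1, q x)) := by
      filter_upwards [eventually_gt_atTop n0] with n hn'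
      rw [hn n hn']; ring
    have h2 : Tendsto (fun _ : ℕ => -(∫ x in (0:ℝ)..1, q x)) atTop (nhds 0) :=
      hasymp.congr' hconst
    have h3 := tendsto_nhds_unique h2 tendsto_const_nhds
    linarith [h3]
  -- Step 2: lam 0 = 0 using the constant test function
  have hlam0 : lam 0 = 0 := by
    have hr : ContDiff ℝ 2 (fun _ : ℝ => (1:ℝ)) := contDiff_const
    have hone : (fun x : ℝ => (((1:ℝ) : ℝ) : ℂ)) = (fun _ : ℝ => (1:ℂ)) := by
      funext x; simp
    have hv := hvar (fun x : ℝ => (((1:ℝ) : ℝ) : ℂ))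
      (by rw [hone]; exact contDiff_const)
      ⟨0, ⟨le_refl 0, zero_le_one⟩, by simp⟩
      (by rw [hone]; exact ⟨by simp, by simp⟩)
    rw [rayleigh_ofReal q (fun _ => 1) hr] at hv
    have hd : deriv (deriv (fun _ : ℝ => (1:ℝ))) = fun _ => 0 := by
      rw [deriv_const']; exact deriv_const' 0
    rw [hd] at hv
    have : (∫ x in (0:ℝ)..1, (-(1:ℝ) * 0 + q x * (1:ℝ)^2)) = 0 := by
      simp only [neg_mul, mul_zero, neg_zero, one_pow, mul_one, zero_add]
      exact hq0
    rw [this] at hv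
    simp at hv
    linarith
  -- Step 3: the variational principle with zero bound
  have hvar0 : ∀ y : ℝ → ℂ, ContDiff ℝ 2 y → (∃ x ∈ Set.Icc (0:ℝ) 1, y x ≠ 0) →
      NeumannBC y → 0 ≤ rayleighQuotientR q y := by
    intro y h1 h2 h3
    have := hvar y h1 h2 h3
    linarith [hlam0 ▸ this]
  -- Step 4: integrals against test functions vanish
  have hIoo : ∀ᵐ x, x ∈ Set.Ioo (0:ℝ) 1 → q x = 0 := by
    apply (isOpen_Ioo : IsOpen (Set.Ioo (0:ℝ) 1)).ae_eq_zero_of_integral_contDiff_smul_eq_zero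
    · exact (hq.mono_set Set.Ioo_subset_Icc_self).locallyIntegrableOn
    · intro g hgsm hgsupp hgt
      have hzero : ∀ x ∉ Set.Ioc (0:ℝ) 1, g x • q x = 0 := by
        intro x hx
        have : x ∉ tsupport g := fun h =>
          hx (Set.Ioo_subset_Ioc_self (hgt h))
        rw [image_eq_zero_of_notMem_tsupport this, zero_smul]
      rw [← setIntegral_eq_integral_of_forall_compl_eq_zero hzero]
      have : (∫ x in Set.Ioc (0:ℝ) 1, g x • q x) = ∫ x in (0:ℝ)..1, q x * g x := by
        rw [intervalIntegral.integral_of_le zero_le_one]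
        congr 1; funext x; simp [smul_eq_mul, mul_comm]
      rw [this]
      exact key_lemma q hq hvar0 hq0 g hgsm hgsupp hgt
  -- Step 5: conclude on Icc
  have hne : ∀ a : ℝ, ∀ᵐ x : ℝ, x ≠ a := by
    intro a
    rw [ae_iff]
    have : {x : ℝ | ¬ x ≠ a} = {a} := by ext x; simp
    rw [this]
    exact Real.volume_singleton
  filter_upwards [hIoo, hne 0, hne 1] with x hx hx0 hx1 hxIcc
  exact hx ⟨lt_of_le_of_ne hxIcc.1 (Ne.symm hx0), lt_of_le_of_ne hxIcc.2 hx1⟩
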